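/- Let A be a Novikov algebra and I a two-sided ideal of A which is right nilpotent, i.e., I^{[k]} = 0 for some k, where I^{[1]} = I and I^{[m+1]} = I^{[m]}·I. Suppose that for every x ∈ A there exists n ≥ 1 with x^n ∈ I, where x^m denotes the left-normed power. Then A is r-nil: for every x ∈ A there exists N ≥ 1 with x^N = 0. -/

import Mathlib

/-- Left-normed power: `lpow x 1 = x`, `lpow x (k+1) = lpow x k * x`
(the value at `0` is a junk value). -/
def lpow {A : Type*} [Mul A] [Zero A] (x : A) : ℕ → A
  | 0 => 0
  | 1 => x
  | (n + 2) => lpow x (n + 1) * x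

/-- Right powers of an ideal: `rPow F I 1 = I` and
`rPow F I (k+1) = span (rPow F I k · I)` (the value at `0` is a junk value). -/
def rPow (F : Type*) {A : Type*} [Field F] [NonUnitalNonAssocRing A]
    [Module F A] (I : Submodule F A) : ℕ → Submodule F A
  | 0 => ⊥
  | 1 => I
  | (k + 2) =>
      Submodule.span F {z : A | ∃ a ∈ rPow F I (k + 1), ∃ b ∈ I, a * b = z}

/-- iterated right multiplication by `x` -/
def rmulIter {A : Type*} [Mul A] (x w : A) : ℕ → A
  | 0 => w
  | (t + 1) => rmulIter x w t * x

section Identities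
variable {A : Type*} [NonUnitalNonAssocRing A] (x : A)

lemma lpow_succ (m : ℕ) (hm : 1 ≤ m) : lpow x (m + 1) = lpow x m * x := by
  match m, hm with
  | (n+1), _ => rfl

lemma lpow_two : lpow x 2 = x * x := rfl

/-- ★ -/
lemma starId (hNov1 : ∀ x y z : A, (x * y) * z - x * (y * z) = (y * x) * z - y * (x * z))
    (hNov2 : ∀ x y z : A, (x * y) * z = (x * z) * y)
    (a b : ℕ) (ha : 1 ≤ a) (hb : 1 ≤ b) :
    lpow x (a+1) * lpow x b - lpow x a * lpow x (b+1)
      = lpow x (b+1) * lpow x a - lpow x b * lpow x (a+1) := by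
  have h := hNov1 (lpow x a) (lpow x b) x
  rw [hNov2 (lpow x a) (lpow x b) x, hNov2 (lpow x b) (lpow x a) x,
    ← lpow_succ x a ha, ← lpow_succ x b hb] at h
  exact h

/-- F2: `x^{b+1} x² = x^{b+3} + W b` where `W = rmulIter x (x(xx)-(xx)x)` -/
lemma F2 (hNov2 : ∀ x y z : A, (x * y) * z = (x * z) * y)
    (b : ℕ) :
    lpow x (b+1) * (x * x)
      = lpow x (b+3) + rmulIter x (x*(x*x) - (x*x)*x) b := by
  induction b with
  | zero =>
    show x * (x*x) = lpow x 3 + (x*(x*x) - (x*x)*x)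
    have : lpow x 3 = (x*x)*x := rfl
    rw [this]; abel
  | succ b ih =>
    have h1 : lpow x (b+2) = lpow x (b+1) * x := rfl
    calc lpow x (b+2) * (x*x) = (lpow x (b+1) * x) * (x*x) := by rw [h1]
      _ = (lpow x (b+1) * (x*x)) * x := by rw [hNov2]
      _ = (lpow x (b+3) + rmulIter x (x*(x*x) - (x*x)*x) b) * x := by rw [ih]
      _ = lpow x (b+4) + rmulIter x (x*(x*x) - (x*x)*x) (b+1) := by
          rw [add_mul]; rfl

/-- F1: `x · x^{b+2} = x^{b+3} + (b+1) • W b` -/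
lemma F1 (hNov1 : ∀ x y z : A, (x * y) * z - x * (y * z) = (y * x) * z - y * (x * z))
    (hNov2 : ∀ x y z : A, (x * y) * z = (x * z) * y)
    (b : ℕ) :
    x * lpow x (b+2)
      = lpow x (b+3) + (b+1) • rmulIter x (x*(x*x) - (x*x)*x) b := by
  induction b with
  | zero =>
    show x * (x*x) = (x*x)*x + 1 • (x*(x*x) - (x*x)*x)
    rw [one_smul]; abel
  | succ b ih =>
    set W : ℕ → A := rmulIter x (x*(x*x) - (x*x)*x) with hW
    show x * lpow x (b+3) = lpow x (b+4) + (b+2) • W (b+1)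
    have hs := starId x hNov1 hNov2 1 (b+2) le_rfl (by omega)
    rw [show b+2+1 = b+3 from rfl] at hs
    -- hs : p2 * p(b+2) - p1 * p(b+3) = p(b+3) * p1 - p(b+2) * p2
    have e1 : lpow x 2 * lpow x (b+2) = (x * lpow x (b+2)) * x := by
      rw [lpow_two, hNov2 x (lpow x (b+2)) x]
    have e2 : lpow x (b+2) * lpow x 2 = lpow x (b+4) + W (b+1) := by
      rw [lpow_two]; exact F2 x hNov2 (b+1)
    have e3 : lpow x (b+3) * x = lpow x (b+4) := rfl
    have e4 : lpow x 1 = x := rfl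
    rw [e1, e4, e2, e3, ih] at hs
    have e5 : x * lpow x (b+3)
        = (lpow x (b+3) + (b+1) • W b) * x - lpow x (b+4)
          + (lpow x (b+4) + W (b+1)) := by
      have := hs
      apply eq_of_sub_eq_zero
      calc x * lpow x (b+3) - ((lpow x (b+3) + (b+1) • W b) * x - lpow x (b+4)
            + (lpow x (b+4) + W (b+1)))
          = -(((lpow x (b+3) + (b+1) • W b) * x - x * lpow x (b+3))
              - (lpow x (b+4) - (lpow x (b+4) + W (b+1)))) := by abel
        _ = 0 := by rw [hs, sub_self, neg_zero]
    rw [e5, add_mul, smul_mul_assoc]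
    have e6 : W b * x = W (b+1) := rfl
    have e7 : lpow x (b+3) * x = lpow x (b+4) := rfl
    rw [e6, e7]
    module

/-- general F: `x^{a+1} · x^{b+2} = x^{a+b+3} + (b+1) • W (a+b)` -/
lemma Fgen (hNov1 : ∀ x y z : A, (x * y) * z - x * (y * z) = (y * x) * z - y * (x * z))
    (hNov2 : ∀ x y z : A, (x * y) * z = (x * z) * y)
    (a b : ℕ) :
    lpow x (a+1) * lpow x (b+2)
      = lpow x (a+b+3) + (b+1) • rmulIter x (x*(x*x) - (x*x)*x) (a+b) := by
  induction a with
  | zero => simpa [show lpow x 1 = x from rfl] using F1 x hNov1 hNov2 b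
  | succ a ih =>
    set W : ℕ → A := rmulIter x (x*(x*x) - (x*x)*x) with hW
    have h1 : lpow x (a+2) = lpow x (a+1) * x := rfl
    calc lpow x (a+2) * lpow x (b+2) = (lpow x (a+1) * x) * lpow x (b+2) := by rw [h1]
      _ = (lpow x (a+1) * lpow x (b+2)) * x := by rw [hNov2]
      _ = (lpow x (a+b+3) + (b+1) • W (a+b)) * x := by rw [ih]
      _ = lpow x (a+b+4) + (b+1) • W (a+b+1) := by
          rw [add_mul, smul_mul_assoc]; rfl
      _ = lpow x (a+1+b+3) + (b+1) • W (a+1+b) := by ring_nf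
  
/-- Main identity -/
lemma mainId (hNov1 : ∀ x y z : A, (x * y) * z - x * (y * z) = (y * x) * z - y * (x * z))
    (hNov2 : ∀ x y z : A, (x * y) * z = (x * z) * y)
    (a b : ℕ) :
    lpow x (a+b+4)
      = (b+2) • (lpow x (a+2) * lpow x (b+2))
        - (b+1) • (lpow x (a+1) * lpow x (b+3)) := by
  have h1 := Fgen x hNov1 hNov2 (a+1) b
  have h2 := Fgen x hNov1 hNov2 a (b+1)
  rw [show a+1+b+3 = a+b+4 by omega, show a+1+b = a+b+1 by omega] at h1
  rw [show a+(b+1)+3 = a+b+4 by omega, show a+(b+1) = a+b+1 by omega,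
    show b+1+2 = b+3 by omega] at h2
  rw [h1, h2]
  module
end Identities

/-- **Theorem 1, second part.** Let `A` be a Novikov algebra
(over a field `F`) and `I` a right nilpotent two-sided ideal of `A`
(`I^{[k]} = 0` for some `k`).  If for every `x ∈ A` there exists `n ≥ 1` with
`x^n ∈ I` (i.e. `A/I` is r-nil), then `A` is r-nil: every `x ∈ A` has a
vanishing left-normed power. -/
theorem novikov_rnil_extension
    (F : Type*) (A : Type*) [Field F] [NonUnitalNonAssocRing A]
    [Module F A] [IsScalarTower F A A] [SMulCommClass F A A]
    (hNov1 : ∀ x y z : A, (x * y) * z - x * (y * z) = (y * x) * z - y * (x * z))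
    (hNov2 : ∀ x y z : A, (x * y) * z = (x * z) * y)
    (I : Submodule F A)
    (hIright : ∀ a ∈ I, ∀ b : A, a * b ∈ I)
    (hIleft : ∀ a ∈ I, ∀ b : A, b * a ∈ I)
    (hInilp : ∃ k : ℕ, 1 ≤ k ∧ rPow F I k = ⊥)
    (hquot : ∀ x : A, ∃ n : ℕ, 1 ≤ n ∧ lpow x n ∈ I) :
    ∀ x : A, ∃ N : ℕ, 1 ≤ N ∧ lpow x N = 0 := by
  -- each right power of `I` is a right ideal
  obtain ⟨k, hk1, hk0⟩ := hInilp
  have hrIdeal : ∀ i : ℕ, ∀ u ∈ rPow F I (i+1), ∀ a : A, u * a ∈ rPow F I (i+1) := by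
    intro i
    induction i with
    | zero => exact fun u hu a => hIright u hu a
    | succ i ih =>
      intro u hu a
      show u * a ∈ Submodule.span F
        {z : A | ∃ p ∈ rPow F I (i+1), ∃ b ∈ I, p * b = z}
      have hu' : u ∈ Submodule.span F
          {z : A | ∃ p ∈ rPow F I (i+1), ∃ b ∈ I, p * b = z} := hu
      clear hu
      induction hu' using Submodule.span_induction with
      | mem w hw =>
        obtain ⟨p, hp, b, hb, rfl⟩ := hw
        rw [hNov2 p b a]
        exact Submodule.subset_span ⟨p * a, ih p hp a, b, hb, rfl⟩
      | zero => rw [zero_mul]; exact Submodule.zero_mem _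
      | add y z _ _ hy hz => rw [add_mul]; exact Submodule.add_mem _ hy hz
      | smul c y _ hy => rw [smul_mul_assoc]; exact Submodule.smul_mem _ c hy
  intro x
  obtain ⟨n, hn1, hnI⟩ := hquot x
  -- all powers `≥ n` lie in `I`
  have hIp : ∀ m : ℕ, n ≤ m → lpow x m ∈ I := by
    intro m hm
    induction m, hm using Nat.le_induction with
    | base => exact hnI
    | succ m hm ih =>
      rw [lpow_succ x m (le_trans hn1 hm)]
      exact hIright _ ih x
  -- climbing the right powers of `I`
  have hclimb : ∀ i : ℕ, ∃ M : ℕ, 1 ≤ M ∧ ∀ m : ℕ, M ≤ m →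
      lpow x m ∈ rPow F I (i+1) := by
    intro i
    induction i with
    | zero => exact ⟨n, hn1, fun m hm => hIp m hm⟩
    | succ i ih =>
      obtain ⟨M, hM1, hM⟩ := ih
      refine ⟨M + n + 4, by omega, ?_⟩
      intro m hm
      obtain ⟨a, rfl⟩ : ∃ a, m = a + n + 4 := ⟨m - n - 4, by omega⟩
      have haM : M ≤ a + 1 := by omega
      rw [mainId x hNov1 hNov2 a n]
      show _ ∈ Submodule.span F
        {z : A | ∃ p ∈ rPow F I (i+1), ∃ b ∈ I, p * b = z}
      have h1 : lpow x (a+2) * lpow x (n+2) ∈ Submodule.span F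
          {z : A | ∃ p ∈ rPow F I (i+1), ∃ b ∈ I, p * b = z} :=
        Submodule.subset_span ⟨lpow x (a+2), hM _ (by omega),
          lpow x (n+2), hIp _ (by omega), rfl⟩
      have h2 : lpow x (a+1) * lpow x (n+3) ∈ Submodule.span F
          {z : A | ∃ p ∈ rPow F I (i+1), ∃ b ∈ I, p * b = z} :=
        Submodule.subset_span ⟨lpow x (a+1), hM _ haM,
          lpow x (n+3), hIp _ (by omega), rfl⟩
      exact Submodule.sub_mem _ (nsmul_mem h1 (n+2)) (nsmul_mem h2 (n+1))
  obtain ⟨i, rfl⟩ : ∃ i, k = i + 1 := ⟨k - 1, by omega⟩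
  obtain ⟨M, hM1, hM⟩ := hclimb i
  refine ⟨M, hM1, ?_⟩
  have := hM M le_rfl
  rw [hk0] at this
  simpa using this
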